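/- Let σ, η > 0. The function φ(y) = (1 + σ·y/(√6·η))^{−2} is the unique bounded, nonnegative, twice continuously differentiable function φ : [0,∞) → ℝ satisfying φ''(y) = (σ²/η²)·φ(y)² for all y > 0, φ(0) = 1, and lim_{y→∞} φ(y) = 0. -/

import Mathlib

open Filter Real Set MeasureTheory ProbabilityTheory

lemma lin_hasDerivAt (k y : ℝ) : HasDerivAt (fun z : ℝ => 1 + k * z) k y := by
  simpa using ((hasDerivAt_id y).const_mul k).const_add 1

lemma phi_hasDerivAt (k y : ℝ) (h : 1 + k * y ≠ 0) :
    HasDerivAt (fun z : ℝ => ((1 + k * z) ^ 2)⁻¹) (-2 * k / (1 + k * y) ^ 3) y := by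
  have hg : HasDerivAt (fun z : ℝ => (1 + k * z) ^ 2) (2 * (1 + k * y) ^ 1 * k) y :=
    (lin_hasDerivAt k y).pow 2
  have h2 : (1 + k * y) ^ 2 ≠ 0 := pow_ne_zero _ h
  have := hg.inv h2
  refine this.congr_deriv (Eq.symm ?_)
  field_simp

lemma phi1_hasDerivAt (k y : ℝ) (h : 1 + k * y ≠ 0) :
    HasDerivAt (fun z : ℝ => -2 * k / (1 + k * z) ^ 3) (6 * k ^ 2 / (1 + k * y) ^ 4) y := by
  have hg : HasDerivAt (fun z : ℝ => (1 + k * z) ^ 3) (3 * (1 + k * y) ^ 2 * k) y :=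
    (lin_hasDerivAt k y).pow 3
  have h3 : (1 + k * y) ^ 3 ≠ 0 := pow_ne_zero _ h
  have H := (hg.inv h3).const_mul (-2 * k)
  have heq : (fun z : ℝ => -2 * k / (1 + k * z) ^ 3) = fun z : ℝ => -2 * k * ((1 + k * z) ^ 3)⁻¹ := by
    funext z; rw [div_eq_mul_inv]
  rw [heq]
  refine H.congr_deriv (Eq.symm ?_)
  field_simp; ring

lemma phi_deriv2 (k : ℝ) (hk : 0 < k) (y : ℝ) (hy : 0 < y) :
    deriv (deriv (fun z : ℝ => ((1 + k * z) ^ 2)⁻¹)) y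
      = 6 * k ^ 2 * (((1 + k * y) ^ 2)⁻¹) ^ 2 := by
  have hopen : IsOpen {z : ℝ | 0 < 1 + k * z} :=
    isOpen_lt continuous_const (by continuity)
  have hmem : y ∈ {z : ℝ | 0 < 1 + k * z} := by
    have : 0 < k * y := mul_pos hk hy
    simp only [mem_setOf_eq]; linarith
  have ev : deriv (fun z : ℝ => ((1 + k * z) ^ 2)⁻¹) =ᶠ[nhds y]
      fun z : ℝ => -2 * k / (1 + k * z) ^ 3 := by
    filter_upwards [hopen.mem_nhds hmem] with z hz
    exact (phi_hasDerivAt k z (ne_of_gt hz)).deriv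
  rw [ev.deriv_eq, (phi1_hasDerivAt k y (ne_of_gt hmem)).deriv]
  have h0 : (1 + k * y) ≠ 0 := ne_of_gt hmem
  field_simp

lemma unique_aux (k : ℝ) (hk : 0 < k) (ψ : ℝ → ℝ)
    (hbd : ∃ C : ℝ, ∀ y : ℝ, 0 ≤ y → |ψ y| ≤ C)
    (hnn : ∀ y : ℝ, 0 ≤ y → 0 ≤ ψ y)
    (hC2 : ContDiffOn ℝ 2 ψ (Ici 0))
    (hode : ∀ y : ℝ, 0 < y → deriv (deriv ψ) y = 6 * k ^ 2 * ψ y ^ 2)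
    (h0 : ψ 0 = 1)
    (hlim : Tendsto ψ atTop (nhds 0)) :
    ∀ y : ℝ, 0 ≤ y → ψ y = ((1 + k * y) ^ 2)⁻¹ := by
  obtain ⟨C, hC⟩ := hbd
  have hcont : ContinuousOn ψ (Ici 0) := hC2.continuousOn
  have hC2' : ContDiffOn ℝ 2 ψ (Ioi 0) := hC2.mono Ioi_subset_Ici_self
  have hψd : ∀ y : ℝ, 0 < y → HasDerivAt ψ (deriv ψ y) y := by
    intro y hy
    exact ((hC2'.contDiffAt (isOpen_Ioi.mem_nhds hy)).differentiableAt
      (by norm_num)).hasDerivAt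
  have hd1 : ContDiffOn ℝ 1 (deriv ψ) (Ioi 0) :=
    hC2'.deriv_of_isOpen isOpen_Ioi (by norm_num)
  have hψ'd : ∀ y : ℝ, 0 < y → HasDerivAt (deriv ψ) (deriv (deriv ψ) y) y := by
    intro y hy
    exact ((hd1.contDiffAt (isOpen_Ioi.mem_nhds hy)).differentiableAt
      (by norm_num)).hasDerivAt
  have hψ'cont : ContinuousOn (deriv ψ) (Ioi 0) := hd1.continuousOn
  -- deriv ψ is monotone on (0, ∞)
  have hmono : MonotoneOn (deriv ψ) (Ioi 0) := by
    apply monotoneOn_of_deriv_nonneg (convex_Ioi 0) hψ'cont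
    · intro x hx
      rw [interior_Ioi] at hx
      exact ((hψ'd x hx).differentiableAt).differentiableWithinAt
    · intro x hx
      rw [interior_Ioi] at hx
      rw [hode x hx]
      positivity
  -- if deriv ψ is eventually ≤ -δ with δ ≥ 0 violated... general growth lemma:
  -- if deriv ψ ≥ m on [y₁,∞) then ψ y ≥ ψ y₁ + m (y - y₁)
  have growth : ∀ m y₁ y : ℝ, 0 < y₁ → y₁ ≤ y →
      (∀ z, y₁ ≤ z → m ≤ deriv ψ z) → ψ y₁ + m * (y - y₁) ≤ ψ y := by
    intro m y₁ y hy₁ hy₁y hm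
    have hmg : MonotoneOn (fun z => ψ z - m * z) (Ici y₁) := by
      apply monotoneOn_of_deriv_nonneg (convex_Ici y₁)
      · intro x hx
        exact ((hψd x (lt_of_lt_of_le hy₁ hx)).differentiableAt.sub
          ((differentiable_id.const_mul m) x)).continuousAt.continuousWithinAt
      · intro x hx
        rw [interior_Ici] at hx
        exact (((hψd x (lt_trans hy₁ hx)).differentiableAt.sub
          ((differentiable_id.const_mul m) x))).differentiableWithinAt
      · intro x hx
        rw [interior_Ici] at hx
        have hx0 : 0 < x := lt_trans hy₁ hx
        have hder : HasDerivAt (fun z => ψ z - m * z) (deriv ψ x - m * 1)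
            x := (hψd x hx0).sub ((hasDerivAt_id x).const_mul m)
        rw [hder.deriv]
        have := hm x (le_of_lt hx)
        linarith
    have := hmg (self_mem_Ici) (mem_Ici.mpr hy₁y) hy₁y
    simp only at this
    linarith
  -- decay: if deriv ψ ≤ m on [y₁,∞) then ψ y ≤ ψ y₁ + m (y - y₁)
  have decay : ∀ m y₁ y : ℝ, 0 < y₁ → y₁ ≤ y →
      (∀ z, y₁ ≤ z → deriv ψ z ≤ m) → ψ y ≤ ψ y₁ + m * (y - y₁) := by
    intro m y₁ y hy₁ hy₁y hm
    have hmg : AntitoneOn (fun z => ψ z - m * z) (Ici y₁) := by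
      apply antitoneOn_of_deriv_nonpos (convex_Ici y₁)
      · intro x hx
        exact ((hψd x (lt_of_lt_of_le hy₁ hx)).differentiableAt.sub
          ((differentiable_id.const_mul m) x)).continuousAt.continuousWithinAt
      · intro x hx
        rw [interior_Ici] at hx
        exact (((hψd x (lt_trans hy₁ hx)).differentiableAt.sub
          ((differentiable_id.const_mul m) x))).differentiableWithinAt
      · intro x hx
        rw [interior_Ici] at hx
        have hx0 : 0 < x := lt_trans hy₁ hx
        have hder : HasDerivAt (fun z => ψ z - m * z) (deriv ψ x - m * 1)
            x := (hψd x hx0).sub ((hasDerivAt_id x).const_mul m)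
        rw [hder.deriv]
        have := hm x (le_of_lt hx)
        linarith
    have := hmg (self_mem_Ici) (mem_Ici.mpr hy₁y) hy₁y
    simp only at this
    linarith
  -- deriv ψ ≤ 0 on (0,∞)
  have hψ'nonpos : ∀ y : ℝ, 0 < y → deriv ψ y ≤ 0 := by
    intro y₁ hy₁
    by_contra hpos
    push_neg at hpos
    set m := deriv ψ y₁ with hm
    have hmle : ∀ z, y₁ ≤ z → m ≤ deriv ψ z := fun z hz =>
      hmono (mem_Ioi.mpr hy₁) (mem_Ioi.mpr (lt_of_lt_of_le hy₁ hz)) hz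
    set y := y₁ + (C - ψ y₁ + 1) / m with hy
    have hCψ : ψ y₁ ≤ C := le_trans (le_abs_self _) (hC y₁ (le_of_lt hy₁))
    have hyy₁ : y₁ ≤ y := by
      rw [hy]; nlinarith [div_nonneg (by linarith : (0:ℝ) ≤ C - ψ y₁ + 1) (le_of_lt hpos)]
    have := growth m y₁ y hy₁ hyy₁ hmle
    have h2 : m * (y - y₁) = C - ψ y₁ + 1 := by
      rw [hy]; field_simp; ring
    have h3 : ψ y ≤ C := le_trans (le_abs_self _) (hC y (le_trans (le_of_lt hy₁) hyy₁))
    linarith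
  -- energy function
  set E : ℝ → ℝ := fun y => (deriv ψ y) ^ 2 - 4 * k ^ 2 * (ψ y) ^ 3 with hEdef
  have hEd : ∀ y : ℝ, 0 < y → HasDerivAt E 0 y := by
    intro y hy
    have h1 : HasDerivAt (fun z => (deriv ψ z) ^ 2)
        (2 * (deriv ψ y) ^ 1 * (deriv (deriv ψ) y)) y := (hψ'd y hy).pow 2
    have h2 : HasDerivAt (fun z => (ψ z) ^ 3)
        (3 * (ψ y) ^ 2 * deriv ψ y) y := by exact ((hψd y hy).pow 3).congr_deriv (by norm_num)
    have h3 := h1.sub (h2.const_mul (4 * k ^ 2))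
    refine h3.congr_deriv (Eq.symm ?_)
    rw [hode y hy]; ring
  have hEcont : ContinuousOn E (Ioi 0) := fun x hx =>
    ((hEd x hx).continuousAt).continuousWithinAt
  have hEdiff : DifferentiableOn ℝ E (interior (Ioi 0)) := by
    rw [interior_Ioi]
    exact fun x hx => ((hEd x hx).differentiableAt).differentiableWithinAt
  have hEconst : ∀ a b : ℝ, 0 < a → 0 < b → E a = E b := by
    have hm1 : MonotoneOn E (Ioi 0) := by
      apply monotoneOn_of_deriv_nonneg (convex_Ioi 0) hEcont hEdiff
      intro x hx; rw [interior_Ioi] at hx; rw [(hEd x hx).deriv]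
    have hm2 : AntitoneOn E (Ioi 0) := by
      apply antitoneOn_of_deriv_nonpos (convex_Ioi 0) hEcont hEdiff
      intro x hx; rw [interior_Ioi] at hx; rw [(hEd x hx).deriv]
    intro a b ha hb
    rcases le_total a b with h | h
    · exact le_antisymm (hm1 ha hb h) (hm2 ha hb h)
    · exact (le_antisymm (hm1 hb ha h) (hm2 hb ha h)).symm
  -- the conserved value
  have hEeq : ∀ y : ℝ, 0 < y → (deriv ψ y) ^ 2 = E 1 + 4 * k ^ 2 * (ψ y) ^ 3 := by
    intro y hy
    have := hEconst y 1 hy one_pos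
    simp only [hEdef] at this ⊢
    linarith
  have hψ3lim : Tendsto (fun y => E 1 + 4 * k ^ 2 * (ψ y) ^ 3) atTop (nhds (E 1)) := by
    have h1 : Tendsto (fun y => (ψ y) ^ 3) atTop (nhds 0) := by
      have := hlim.pow 3
      simpa using this
    have h2 := (h1.const_mul (4 * k ^ 2)).const_add (E 1)
    simpa using h2
  have hE1nn : 0 ≤ E 1 := by
    apply ge_of_tendsto hψ3lim
    filter_upwards [eventually_gt_atTop 0] with y hy
    rw [← hEeq y hy]; positivity
  have hψ'eq : ∀ y : ℝ, 0 < y →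
      deriv ψ y = -Real.sqrt (E 1 + 4 * k ^ 2 * (ψ y) ^ 3) := by
    intro y hy
    have h1 := Real.sqrt_sq_eq_abs (deriv ψ y)
    rw [abs_of_nonpos (hψ'nonpos y hy), hEeq y hy] at h1
    linarith
  have hψ'lim : Tendsto (deriv ψ) atTop (nhds (-Real.sqrt (E 1))) := by
    have h1 : Tendsto (fun y => -Real.sqrt (E 1 + 4 * k ^ 2 * (ψ y) ^ 3))
        atTop (nhds (-Real.sqrt (E 1))) :=
      ((Real.continuous_sqrt.tendsto _).comp hψ3lim).neg
    apply h1.congr'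
    filter_upwards [eventually_gt_atTop 0] with y hy
    exact (hψ'eq y hy).symm
  have hE1 : E 1 = 0 := by
    by_contra hne
    have hE1pos : 0 < E 1 := lt_of_le_of_ne hE1nn (Ne.symm hne)
    set δ := Real.sqrt (E 1) with hδ
    have hδpos : 0 < δ := Real.sqrt_pos.mpr hE1pos
    have hev : ∀ᶠ y in atTop, deriv ψ y < -(δ / 2) := by
      apply hψ'lim.eventually_lt_const
      linarith
    obtain ⟨y₀, hy₀⟩ := eventually_atTop.mp hev
    set y₁ := max y₀ 1 with hy₁def
    have hy₁pos : 0 < y₁ := lt_of_lt_of_le one_pos (le_max_right _ _)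
    have hmle : ∀ z, y₁ ≤ z → deriv ψ z ≤ -(δ / 2) := fun z hz =>
      le_of_lt (hy₀ z (le_trans (le_max_left _ _) hz))
    set y := y₁ + (ψ y₁ + 1) / (δ / 2) with hydef
    have hψy₁ : 0 ≤ ψ y₁ := hnn y₁ (le_of_lt hy₁pos)
    have hyy₁ : y₁ ≤ y := by
      rw [hydef]
      nlinarith [div_nonneg (by linarith : (0:ℝ) ≤ ψ y₁ + 1) (by linarith : (0:ℝ) ≤ δ / 2)]
    have hd := decay (-(δ / 2)) y₁ y hy₁pos hyy₁ hmle
    have h2 : -(δ / 2) * (y - y₁) = -(ψ y₁ + 1) := by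
      rw [hydef]; field_simp; ring
    have h3 : 0 ≤ ψ y := hnn y (le_trans (le_of_lt hy₁pos) hyy₁)
    rw [h2] at hd
    linarith
  have hψ'form : ∀ y : ℝ, 0 < y →
      deriv ψ y = -(2 * k * ψ y * Real.sqrt (ψ y)) := by
    intro y hy
    have hψy := hnn y (le_of_lt hy)
    have h1 := hψ'eq y hy
    rw [hE1] at h1
    rw [h1, show (0:ℝ) + 4 * k ^ 2 * (ψ y) ^ 3 = (2 * k * ψ y) ^ 2 * ψ y by ring,
      Real.sqrt_mul (sq_nonneg _), Real.sqrt_sq (by positivity)]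
  -- key: on an interval [0,b] where ψ > 0, ψ has the explicit form
  have hkey : ∀ b : ℝ, 0 < b → (∀ z ∈ Icc (0:ℝ) b, 0 < ψ z) →
      ∀ y ∈ Icc (0:ℝ) b, ψ y = ((1 + k * y) ^ 2)⁻¹ := by
    intro b hb hpos y hy
    set h : ℝ → ℝ := fun z => (Real.sqrt (ψ z))⁻¹ with hhdef
    have hder : ∀ z ∈ Ioc (0:ℝ) b, HasDerivAt h k z := by
      intro z hz
      have hz0 := hz.1
      have hψz : 0 < ψ z := hpos z ⟨le_of_lt hz.1, hz.2⟩
      have hs : HasDerivAt (fun w => Real.sqrt (ψ w))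
          (deriv ψ z / (2 * Real.sqrt (ψ z))) z := (hψd z hz0).sqrt (ne_of_gt hψz)
      have hsne : Real.sqrt (ψ z) ≠ 0 := ne_of_gt (Real.sqrt_pos.mpr hψz)
      have hinv := hs.inv hsne
      refine hinv.congr_deriv (Eq.symm ?_)
      have hsq : Real.sqrt (ψ z) * Real.sqrt (ψ z) = ψ z :=
        Real.mul_self_sqrt (le_of_lt hψz)
      rw [hψ'form z hz0]
      field_simp
      nlinarith [hsq]
    rcases eq_or_lt_of_le hy.1 with hy0 | hy0
    · rw [← hy0, h0]; norm_num
    -- y > 0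
    have hconst : ∀ ε : ℝ, 0 < ε → ε ≤ y → h y - k * y = h ε - k * ε := by
      intro ε hε hεy
      have hsub : Icc ε y ⊆ Ioc 0 b := fun z hz =>
        ⟨lt_of_lt_of_le hε hz.1, le_trans hz.2 hy.2⟩
      have hFd : ∀ x ∈ Ico ε y, HasDerivWithinAt (fun z => h z - k * z) 0 (Ici x) x := by
        intro x hx
        have hx' : x ∈ Ioc 0 b := hsub ⟨hx.1, le_of_lt hx.2⟩
        have : HasDerivAt (fun z => h z - k * z) (k - k * 1) x :=
          (hder x hx').sub ((hasDerivAt_id x).const_mul k)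
        simpa using this.hasDerivWithinAt
      have hFc : ContinuousOn (fun z => h z - k * z) (Icc ε y) := by
        intro x hx
        exact (((hder x (hsub hx)).sub
          ((hasDerivAt_id x).const_mul k)).continuousAt).continuousWithinAt
      have := constant_of_has_deriv_right_zero hFc hFd y (right_mem_Icc.mpr hεy)
      simpa using this
    -- continuity of h at 0 from the right
    have hψ0 : ContinuousWithinAt ψ (Ici 0) 0 := hcont 0 self_mem_Ici
    have hh0 : Tendsto h (nhdsWithin 0 (Ioi 0)) (nhds 1) := by
      have h1 : ContinuousWithinAt h (Ici 0) 0 := by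
        apply (hψ0.sqrt).inv₀
        rw [h0]; simp
      have h2 : h 0 = 1 := by rw [hhdef]; simp [h0]
      have h3 := h1.tendsto
      rw [h2] at h3
      exact h3.mono_left (nhdsWithin_mono 0 Ioi_subset_Ici_self)
    have hh0' : Tendsto (fun ε : ℝ => h y - k * y + k * ε)
        (nhdsWithin 0 (Ioi 0)) (nhds (h y - k * y)) := by
      have : Tendsto (fun ε : ℝ => h y - k * y + k * ε) (nhds 0)
          (nhds (h y - k * y + k * 0)) := by
        exact (continuous_const.add (continuous_const.mul continuous_id)).tendsto 0
      simpa using this.mono_left nhdsWithin_le_nhds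
    have heq : (fun ε : ℝ => h y - k * y + k * ε) =ᶠ[nhdsWithin 0 (Ioi 0)] h := by
      filter_upwards [Ioc_mem_nhdsGT_of_mem (by simp [hy0] : (0:ℝ) ∈ Ico 0 y)] with ε hε
      have := hconst ε hε.1 hε.2
      linarith
    have huniq : h y - k * y = 1 :=
      tendsto_nhds_unique (hh0'.congr' heq) hh0
    -- conclude
    have hψy : 0 < ψ y := hpos y hy
    have hsne : Real.sqrt (ψ y) ≠ 0 := ne_of_gt (Real.sqrt_pos.mpr hψy)
    have hhy : (Real.sqrt (ψ y))⁻¹ = 1 + k * y := by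
      have : h y = 1 + k * y := by linarith
      rw [hhdef] at this; exact this
    have hsy : Real.sqrt (ψ y) = (1 + k * y)⁻¹ := by
      rw [← hhy, inv_inv]
    rw [← Real.sq_sqrt (le_of_lt hψy), hsy, inv_pow]
  -- ψ is strictly positive on [0,∞)
  have hpos : ∀ y : ℝ, 0 ≤ y → 0 < ψ y := by
    by_contra hcon
    push_neg at hcon
    obtain ⟨a₀, ha₀, ha₀'⟩ := hcon
    have ha₀0 : ψ a₀ = 0 := le_antisymm ha₀' (hnn a₀ ha₀)
    set T : Set ℝ := Ici 0 ∩ ψ ⁻¹' {0} with hT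
    have hTne : T.Nonempty := ⟨a₀, ha₀, ha₀0⟩
    have hTbdd : BddBelow T := ⟨0, fun x hx => hx.1⟩
    have hTclosed : IsClosed T :=
      hcont.preimage_isClosed_of_isClosed isClosed_Ici isClosed_singleton
    set a := sInf T with ha
    have haT : a ∈ T := hTclosed.csInf_mem hTne hTbdd
    have ha0 : (0:ℝ) ≤ a := haT.1
    have hψa : ψ a = 0 := haT.2
    have hapos : 0 < a := by
      rcases eq_or_lt_of_le ha0 with h | h
      · exfalso; rw [← h, h0] at hψa; norm_num at hψa
      · exact h
    have hlt : ∀ z, 0 ≤ z → z < a → 0 < ψ z := by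
      intro z hz hza
      rcases (hnn z hz).lt_or_eq with h | h
      · exact h
      · exfalso
        have hzT : z ∈ T := ⟨hz, h.symm⟩
        exact absurd (csInf_le hTbdd hzT) (not_le.mpr hza)
    have hform : ∀ z, 0 < z → z < a → ψ z = ((1 + k * z) ^ 2)⁻¹ := by
      intro z hz hza
      exact hkey z hz (fun w hw => hlt w hw.1 (lt_of_le_of_lt hw.2 hza)) z
        ⟨le_of_lt hz, le_refl z⟩
    have hca : ContinuousAt ψ a :=
      (hcont a (mem_Ici.mpr ha0)).continuousAt (Ici_mem_nhds hapos)
    have h1 : Tendsto ψ (nhdsWithin a (Iio a)) (nhds 0) := by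
      have : Tendsto ψ (nhdsWithin a (Iio a)) (nhds (ψ a)) :=
        hca.tendsto.mono_left nhdsWithin_le_nhds
      rwa [hψa] at this
    have h1ka : (0:ℝ) < 1 + k * a := by nlinarith
    have h2 : Tendsto (fun z => ((1 + k * z) ^ 2)⁻¹) (nhdsWithin a (Iio a))
        (nhds (((1 + k * a) ^ 2)⁻¹)) := by
      have hcont2 : ContinuousAt (fun z : ℝ => ((1 + k * z) ^ 2)⁻¹) a := by
        apply ContinuousAt.inv₀
        · exact ((continuous_const.add (continuous_const.mul continuous_id)).pow 2).continuousAt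
        · positivity
      exact hcont2.tendsto.mono_left nhdsWithin_le_nhds
    have h3 : ψ =ᶠ[nhdsWithin a (Iio a)] fun z => ((1 + k * z) ^ 2)⁻¹ := by
      filter_upwards [Ioo_mem_nhdsLT_of_mem
        (show a ∈ Ioc (0:ℝ) a from ⟨hapos, le_refl a⟩)] with z hz
      exact hform z hz.1 hz.2
    have heq0 := tendsto_nhds_unique (h1.congr' h3) h2
    have : (0:ℝ) < ((1 + k * a) ^ 2)⁻¹ := by positivity
    rw [← heq0] at this
    exact lt_irrefl 0 this
  -- conclusion
  intro y hy
  rcases eq_or_lt_of_le hy with h | h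
  · rw [← h, h0]; norm_num
  · exact hkey y h (fun z hz => hpos z hz.1) y ⟨hy, le_refl y⟩


/-- for `σ, η > 0`, the function `φ(y) = (1 + σy/(√6 η))⁻²` is the
unique bounded, nonnegative, twice continuously differentiable solution on `[0,∞)` of
`φ'' = (σ²/η²) φ²` with `φ(0) = 1` and `φ(y) → 0` as `y → ∞`. -/
theorem fleischman_sawyer_ode_unique (σ η : ℝ) (hσ : 0 < σ) (hη : 0 < η) :
    (∃ C : ℝ, ∀ y : ℝ, 0 ≤ y →
        |((1 + σ * y / (Real.sqrt 6 * η)) ^ 2)⁻¹| ≤ C)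
    ∧ (∀ y : ℝ, 0 ≤ y → 0 ≤ ((1 + σ * y / (Real.sqrt 6 * η)) ^ 2)⁻¹)
    ∧ ContDiffOn ℝ 2 (fun y : ℝ => ((1 + σ * y / (Real.sqrt 6 * η)) ^ 2)⁻¹) (Set.Ici 0)
    ∧ (∀ y : ℝ, 0 < y →
        deriv (deriv (fun z : ℝ => ((1 + σ * z / (Real.sqrt 6 * η)) ^ 2)⁻¹)) y
          = (σ ^ 2 / η ^ 2) * (((1 + σ * y / (Real.sqrt 6 * η)) ^ 2)⁻¹) ^ 2)
    ∧ ((1 + σ * (0 : ℝ) / (Real.sqrt 6 * η)) ^ 2)⁻¹ = 1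
    ∧ Tendsto (fun y : ℝ => ((1 + σ * y / (Real.sqrt 6 * η)) ^ 2)⁻¹) atTop (nhds 0)
    ∧ ∀ ψ : ℝ → ℝ,
        (∃ C : ℝ, ∀ y : ℝ, 0 ≤ y → |ψ y| ≤ C) →
        (∀ y : ℝ, 0 ≤ y → 0 ≤ ψ y) →
        ContDiffOn ℝ 2 ψ (Set.Ici 0) →
        (∀ y : ℝ, 0 < y → deriv (deriv ψ) y = (σ ^ 2 / η ^ 2) * (ψ y) ^ 2) →
        ψ 0 = 1 →
        Tendsto ψ atTop (nhds 0) →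
        ∀ y : ℝ, 0 ≤ y → ψ y = ((1 + σ * y / (Real.sqrt 6 * η)) ^ 2)⁻¹ := by
  have h6 : (Real.sqrt 6) ^ 2 = 6 := Real.sq_sqrt (by norm_num)
  have h6pos : 0 < Real.sqrt 6 := Real.sqrt_pos.mpr (by norm_num)
  set k : ℝ := σ / (Real.sqrt 6 * η) with hkdef
  have hk : 0 < k := div_pos hσ (mul_pos h6pos hη)
  have heq : ∀ y : ℝ, σ * y / (Real.sqrt 6 * η) = k * y := by
    intro y; rw [hkdef]; ring
  have hc : σ ^ 2 / η ^ 2 = 6 * k ^ 2 := by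
    rw [hkdef, div_pow, mul_pow, h6]
    field_simp
  have hfeq : (fun y : ℝ => ((1 + σ * y / (Real.sqrt 6 * η)) ^ 2)⁻¹)
      = fun y : ℝ => ((1 + k * y) ^ 2)⁻¹ := by
    funext y; rw [heq y]
  have hlinpos : ∀ y : ℝ, 0 ≤ y → 0 < 1 + k * y := by
    intro y hy; nlinarith
  refine ⟨⟨1, ?_⟩, ?_, ?_, ?_, ?_, ?_, ?_⟩
  · intro y hy
    rw [heq y]
    have hky : 0 ≤ k * y := mul_nonneg hk.le hy
    have h1 : 1 ≤ (1 + k * y) ^ 2 := by nlinarith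
    rw [abs_of_nonneg (by positivity)]
    exact inv_le_one_of_one_le₀ h1
  · intro y hy; rw [heq y]; positivity
  · rw [hfeq]
    apply ContDiffOn.inv
    · exact ((contDiff_const.add (contDiff_const.mul contDiff_id)).pow 2).contDiffOn
    · intro x hx
      exact ne_of_gt (pow_pos (hlinpos x hx) 2)
  · intro y hy
    rw [hfeq, heq y, phi_deriv2 k hk y hy, hc]
  · norm_num
  · rw [hfeq]
    have h1 : Tendsto (fun y : ℝ => 1 + k * y) atTop atTop :=
      tendsto_atTop_add_const_left _ 1 (Tendsto.const_mul_atTop hk tendsto_id)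
    have h2 : Tendsto (fun y : ℝ => (1 + k * y) ^ 2) atTop atTop :=
      (tendsto_pow_atTop two_ne_zero).comp h1
    exact h2.inv_tendsto_atTop
  · intro ψ hbd hnn hC2 hode h0 hlim y hy
    rw [heq y]
    refine unique_aux k hk ψ hbd hnn hC2 ?_ h0 hlim y hy
    intro z hz
    rw [hode z hz, hc]
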